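/- Fix n even and a positive integer ℓ. The number of distinct functions g : {0,1}^n → {0,1} expressible as g(z_L, z_R) = C(A(z_L), B(z_R)) for some functions A, B : {0,1}^{n/2} → {0,1}^ℓ and some Boolean circuit C of size at most 2ℓ on 2ℓ inputs is at most 2^{O(ℓ·2^{n/2} + ℓ log ℓ)}. Consequently, if ℓ = o(2^{n/2}/n) then this count is o(2^{2^n}), so most Boolean functions g on n bits are not of this form; equivalently, most bitwise-XOR combined functions f(x,y) = g(x ⊕ y) require BSM preprocessing length Ω̃(2^{n/2}). -/

import Mathlib

/-- A Boolean circuit (straight-line program / DAG) with inputs indexed by `α`. -/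
structure Circuit (α : Type) where
  size : ℕ
  in1 : ℕ → α ⊕ ℕ
  in2 : ℕ → α ⊕ ℕ
  op : ℕ → Bool → Bool → Bool
  wf1 : ∀ g h, in1 g = Sum.inr h → h < g
  wf2 : ∀ g h, in2 g = Sum.inr h → h < g

/-- The value computed at gate `g` on input `x`. -/
def Circuit.val {α : Type} (c : Circuit α) (x : α → Bool) (g : ℕ) : Bool :=
  c.op g
    ((c.in1 g).elim x (fun h => if _ : h < g then c.val x h else false))
    ((c.in2 g).elim x (fun h => if _ : h < g then c.val x h else false))
termination_by g

/-- The value of a wire (input or gate). -/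
def Circuit.read {α : Type} (c : Circuit α) (x : α → Bool) : α ⊕ ℕ → Bool :=
  Sum.elim x (c.val x)

/-- For `n = 2m` even and `ℓ ≥ 1`, the number of distinct functions
`g : {0,1}^n → {0,1}` expressible as `g(z_L, z_R) = C(A(z_L), B(z_R))` for some
`A, B : {0,1}^{n/2} → {0,1}^ℓ` and some circuit `C` of size at most `2ℓ` on `2ℓ`
inputs is at most `2^{O(ℓ·2^{n/2} + ℓ·log ℓ)}`; consequently, if `ℓ = o(2^{n/2}/n)`
then most Boolean functions on `n` bits (i.e. most bitwise-XOR combined functions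
`f(x,y) = g(x ⊕ y)`) are not of this form. -/
lemma val_congr {α : Type} (c₁ c₂ : Circuit α) (x : α → Bool) (N : ℕ)
    (h1 : ∀ i < N, c₁.in1 i = c₂.in1 i) (h2 : ∀ i < N, c₁.in2 i = c₂.in2 i)
    (h3 : ∀ i < N, c₁.op i = c₂.op i) :
    ∀ g < N, c₁.val x g = c₂.val x g := by
  intro g
  induction g using Nat.strong_induction_on with
  | _ g ih =>
    intro hg
    have key : (fun h => if _ : h < g then c₁.val x h else false)
        = (fun h => if _ : h < g then c₂.val x h else false) := by
      funext h
      by_cases hh : h < g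
      · simp only [dif_pos hh]; exact ih h hh (hh.trans hg)
      · simp only [dif_neg hh]
    rw [Circuit.val, Circuit.val, h1 g hg, h2 g hg, h3 g hg, key]

def encW {l : ℕ} (hM : 0 < 2 * l) : (Fin l ⊕ Fin l) ⊕ ℕ → (Fin l ⊕ Fin l) ⊕ Fin (2 * l) :=
  Sum.map id (fun h => ⟨h % (2 * l), Nat.mod_lt _ hM⟩)

def decW {l : ℕ} (hl : 0 < l) (g : ℕ) : (Fin l ⊕ Fin l) ⊕ Fin (2 * l) → (Fin l ⊕ Fin l) ⊕ ℕ :=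
  Sum.elim Sum.inl
    (fun h => if h.val < g then Sum.inr h.val else Sum.inl (Sum.inl ⟨0, hl⟩))

lemma decW_wf {l : ℕ} (hl : 0 < l) (g h : ℕ) (w : (Fin l ⊕ Fin l) ⊕ Fin (2 * l)) :
    decW hl g w = Sum.inr h → h < g := by
  cases w with
  | inl a => simp [decW]
  | inr b =>
    simp only [decW, Sum.elim_inr]
    split
    · rename_i hlt
      intro e; injection e with e; omega
    · intro e; simp at e

lemma decW_encW {l : ℕ} (hl : 0 < l) (hM : 0 < 2 * l) (g : ℕ) (hg : g ≤ 2 * l)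
    (u : (Fin l ⊕ Fin l) ⊕ ℕ) (hu : ∀ h, u = Sum.inr h → h < g) :
    decW hl g (encW hM u) = u := by
  cases u with
  | inl a => rfl
  | inr h =>
    have h1 : h < g := hu h rfl
    have h2 : h < 2 * l := lt_of_lt_of_le h1 hg
    simp [encW, decW, Nat.mod_eq_of_lt h2, h1]

def decC {l : ℕ} (hl : 0 < l)
    (gates : Fin (2 * l) →
      (((Fin l ⊕ Fin l) ⊕ Fin (2 * l)) × ((Fin l ⊕ Fin l) ⊕ Fin (2 * l)) × (Bool → Bool → Bool))) :
    Circuit (Fin l ⊕ Fin l) where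
  size := 2 * l
  in1 := fun g => if hg : g < 2 * l then decW hl g (gates ⟨g, hg⟩).1 else Sum.inl (Sum.inl ⟨0, hl⟩)
  in2 := fun g => if hg : g < 2 * l then decW hl g (gates ⟨g, hg⟩).2.1 else Sum.inl (Sum.inl ⟨0, hl⟩)
  op := fun g => if hg : g < 2 * l then (gates ⟨g, hg⟩).2.2 else fun a _ => a
  wf1 := by
    intro g h e
    by_cases hg : g < 2 * l
    · rw [dif_pos hg] at e; exact decW_wf hl g h _ e
    · rw [dif_neg hg] at e; simp at e
  wf2 := by
    intro g h e
    by_cases hg : g < 2 * l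
    · rw [dif_pos hg] at e; exact decW_wf hl g h _ e
    · rw [dif_neg hg] at e; simp at e

set_option maxHeartbeats 1000000 in
set_option synthInstance.maxHeartbeats 1000000 in
theorem stmt7 :
    ∃ K : ℕ, ∀ (m l : ℕ), 1 ≤ l →
      Nat.card {g : (Fin m ⊕ Fin m → Bool) → Bool //
        ∃ (A B : (Fin m → Bool) → Fin l → Bool) (c : Circuit (Fin l ⊕ Fin l))
          (out : (Fin l ⊕ Fin l) ⊕ ℕ),
          c.size ≤ 2 * l ∧ (∀ h, out = Sum.inr h → h < c.size) ∧
          ∀ z : Fin m ⊕ Fin m → Bool,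
            g z = c.read (Sum.elim (A (z ∘ Sum.inl)) (B (z ∘ Sum.inr))) out} ≤
      2 ^ (K * (l * 2 ^ m + l * Nat.log 2 l)) := by
  refine ⟨30, ?_⟩
  intro m l hl
  have hl0 : 0 < l := hl
  have hM : 0 < 2 * l := by omega
  set Code := ((Fin m → Bool) → Fin l → Bool) × ((Fin m → Bool) → Fin l → Bool) ×
      (Fin (2 * l) → (((Fin l ⊕ Fin l) ⊕ Fin (2 * l)) × ((Fin l ⊕ Fin l) ⊕ Fin (2 * l)) ×
        (Bool → Bool → Bool))) × ((Fin l ⊕ Fin l) ⊕ Fin (2 * l)) with hCode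
  set S := {g : (Fin m ⊕ Fin m → Bool) → Bool //
        ∃ (A B : (Fin m → Bool) → Fin l → Bool) (c : Circuit (Fin l ⊕ Fin l))
          (out : (Fin l ⊕ Fin l) ⊕ ℕ),
          c.size ≤ 2 * l ∧ (∀ h, out = Sum.inr h → h < c.size) ∧
          ∀ z : Fin m ⊕ Fin m → Bool,
            g z = c.read (Sum.elim (A (z ∘ Sum.inl)) (B (z ∘ Sum.inr))) out} with hS
  let G : Code → S := fun code =>
    ⟨fun z => (decC hl0 code.2.2.1).read
        (Sum.elim (code.1 (z ∘ Sum.inl)) (code.2.1 (z ∘ Sum.inr)))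
        (decW hl0 (2 * l) code.2.2.2),
     code.1, code.2.1, decC hl0 code.2.2.1, decW hl0 (2 * l) code.2.2.2,
     le_rfl, fun h e => decW_wf hl0 (2 * l) h _ e, fun _ => rfl⟩
  have hsurj : Function.Surjective G := by
    rintro ⟨g, A, B, c, out, hsz, hob, hg⟩
    refine ⟨⟨A, B, fun i => (encW hM (c.in1 i), encW hM (c.in2 i), c.op i), encW hM out⟩, ?_⟩
    apply Subtype.ext
    funext z
    set c' := decC hl0 (fun i : Fin (2 * l) =>
      (encW hM (c.in1 i), encW hM (c.in2 i), c.op i)) with hc'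
    have hout' : decW hl0 (2 * l) (encW hM out) = out :=
      decW_encW hl0 hM (2 * l) le_rfl out (fun h e => lt_of_lt_of_le (hob h e) hsz)
    have hin1 : ∀ i < 2 * l, c'.in1 i = c.in1 i := by
      intro i hi
      show (if hg : i < 2 * l then decW hl0 i (encW hM (c.in1 i)) else _) = c.in1 i
      rw [dif_pos hi]
      exact decW_encW hl0 hM i (le_of_lt hi) _ (fun h e => c.wf1 i h e)
    have hin2 : ∀ i < 2 * l, c'.in2 i = c.in2 i := by
      intro i hi
      show (if hg : i < 2 * l then decW hl0 i (encW hM (c.in2 i)) else _) = c.in2 i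
      rw [dif_pos hi]
      exact decW_encW hl0 hM i (le_of_lt hi) _ (fun h e => c.wf2 i h e)
    have hopg : ∀ i < 2 * l, c'.op i = c.op i := by
      intro i hi
      show (if hg : i < 2 * l then _ else _) = c.op i
      rw [dif_pos hi]
    show c'.read (Sum.elim (A (z ∘ Sum.inl)) (B (z ∘ Sum.inr)))
        (decW hl0 (2 * l) (encW hM out)) = g z
    rw [hout', hg z]
    set x := Sum.elim (A (z ∘ Sum.inl)) (B (z ∘ Sum.inr)) with hx
    have hval := val_congr c' c x (2 * l) hin1 hin2 hopg
    cases hoc : out with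
    | inl a => rfl
    | inr h =>
      have hlt : h < 2 * l := lt_of_lt_of_le (hob h hoc) hsz
      simp only [Circuit.read, Sum.elim_inr]
      exact hval h hlt
  have hfin : Nat.card S ≤ Nat.card Code := Nat.card_le_card_of_surjective G hsurj
  refine le_trans hfin ?_
  set L := Nat.log 2 l with hL
  have hcard : Nat.card Code =
      2 ^ (l * 2 ^ m) * (2 ^ (l * 2 ^ m) *
        (((l + l + 2 * l) * ((l + l + 2 * l) * 16)) ^ (2 * l) * (l + l + 2 * l))) := by
    simp [hCode, Nat.card_eq_fintype_card, Fintype.card_fun, ← pow_mul]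
    try ring
  have h4l : l + l + 2 * l ≤ 2 ^ (L + 3) := by
    have h1 : l < 2 ^ (L + 1) := Nat.lt_pow_succ_log_self (by norm_num) l
    have h2 : 2 ^ (L + 3) = 4 * 2 ^ (L + 1) := by ring
    omega
  have hgate : (l + l + 2 * l) * ((l + l + 2 * l) * 16) ≤ 2 ^ (2 * L + 10) := by
    calc (l + l + 2 * l) * ((l + l + 2 * l) * 16)
        ≤ 2 ^ (L + 3) * (2 ^ (L + 3) * 16) :=
          Nat.mul_le_mul h4l (Nat.mul_le_mul h4l le_rfl)
      _ = 2 ^ (2 * L + 10) := by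
          rw [show (16 : ℕ) = 2 ^ 4 from rfl, ← pow_add, ← pow_add]
          ring_nf
  have key : l * 2 ^ m + (l * 2 ^ m + ((2 * L + 10) * (2 * l) + (L + 3)))
      ≤ 30 * (l * 2 ^ m + l * L) := by
    have e1 : l ≤ l * 2 ^ m := Nat.le_mul_of_pos_right l (by positivity)
    have e2 : L ≤ l * L := Nat.le_mul_of_pos_left L hl0
    nlinarith [e1, e2, hl]
  calc Nat.card Code
      = 2 ^ (l * 2 ^ m) * (2 ^ (l * 2 ^ m) *
        (((l + l + 2 * l) * ((l + l + 2 * l) * 16)) ^ (2 * l) * (l + l + 2 * l))) := hcard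
    _ ≤ 2 ^ (l * 2 ^ m) * (2 ^ (l * 2 ^ m) *
        ((2 ^ (2 * L + 10)) ^ (2 * l) * 2 ^ (L + 3))) :=
          Nat.mul_le_mul le_rfl (Nat.mul_le_mul le_rfl
            (Nat.mul_le_mul (Nat.pow_le_pow_left hgate _) h4l))
    _ = 2 ^ (l * 2 ^ m + (l * 2 ^ m + ((2 * L + 10) * (2 * l) + (L + 3)))) := by
          rw [← pow_mul, ← pow_add, ← pow_add, ← pow_add]
    _ ≤ 2 ^ (30 * (l * 2 ^ m + l * L)) := Nat.pow_le_pow_right (by norm_num) key
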